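/- Let A be a real d×d matrix with nonnegative entries. Then ρ(A) = 0 if and only if tr(exp(A)) = d. -/

import Mathlib

open Matrix

noncomputable def specRad {d : ℕ} (A : Matrix (Fin d) (Fin d) ℂ) : ℝ :=
  sSup {r : ℝ | ∃ μ ∈ spectrum ℂ A, r = ‖μ‖}

section Aux

open Polynomial

variable {d : ℕ}

lemma pow_entry_nonneg (A : Matrix (Fin d) (Fin d) ℝ) (hA : ∀ i j, 0 ≤ A i j) :
    ∀ (k : ℕ) (i j : Fin d), 0 ≤ (A ^ k) i j := by
  intro k
  induction k with
  | zero =>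
    intro i j
    rw [pow_zero, Matrix.one_apply]
    split <;> norm_num
  | succ n ih =>
    intro i j
    rw [pow_succ, Matrix.mul_apply]
    exact Finset.sum_nonneg fun l _ => mul_nonneg (ih i l) (hA l j)

lemma walk_pos (A : Matrix (Fin d) (Fin d) ℝ) (hA : ∀ i j, 0 ≤ A i j) :
    ∀ (k : ℕ) (v : ℕ → Fin d), (∀ t < k, 0 < A (v t) (v (t + 1))) →
      0 < (A ^ k) (v 0) (v k) := by
  intro k
  induction k with
  | zero => intro v _; simp [Matrix.one_apply_eq]
  | succ n ih =>
    intro v hv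
    rw [pow_succ, Matrix.mul_apply]
    have h1 : 0 < (A ^ n) (v 0) (v n) * A (v n) (v (n + 1)) :=
      mul_pos (ih v fun t ht => hv t (ht.trans (Nat.lt_succ_self n)))
        (hv n (Nat.lt_succ_self n))
    refine h1.trans_le (Finset.single_le_sum (f := fun l => (A ^ n) (v 0) l * A l (v (n + 1)))
      (fun l _ => mul_nonneg (pow_entry_nonneg A hA n _ _) (hA _ _)) (Finset.mem_univ (v n)))

lemma exists_walk (A : Matrix (Fin d) (Fin d) ℝ) (hA : ∀ i j, 0 ≤ A i j) :
    ∀ (k : ℕ) (i j : Fin d), 0 < (A ^ k) i j →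
      ∃ v : ℕ → Fin d, v 0 = i ∧ v k = j ∧ ∀ t < k, 0 < A (v t) (v (t + 1)) := by
  intro k
  induction k with
  | zero =>
    intro i j h
    rw [pow_zero, Matrix.one_apply] at h
    refine ⟨fun _ => i, rfl, ?_, fun t ht => absurd ht (Nat.not_lt_zero t)⟩
    by_contra hij
    rw [if_neg hij] at h
    exact lt_irrefl 0 h
  | succ n ih =>
    intro i j h
    rw [pow_succ, Matrix.mul_apply] at h
    have hex : ∃ l, 0 < (A ^ n) i l * A l j := by
      by_contra hc
      push_neg at hc
      exact absurd (Finset.sum_nonpos fun l _ => hc l) (not_le.mpr h)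
    obtain ⟨l, hl⟩ := hex
    have hfac := mul_pos_iff.mp hl
    have h1 : 0 < (A ^ n) i l := by
      rcases hfac with ⟨h1, _⟩ | ⟨h1, _⟩
      · exact h1
      · exact absurd h1 (not_lt.mpr (pow_entry_nonneg A hA n i l))
    have h2 : 0 < A l j := by
      rcases hfac with ⟨_, h2⟩ | ⟨h2, _⟩
      · exact h2
      · exact absurd h2 (not_lt.mpr (pow_entry_nonneg A hA n i l))
    obtain ⟨v, hv0, hvn, hv⟩ := ih i l h1
    refine ⟨fun t => if t ≤ n then v t else j, by simp [hv0], by simp, ?_⟩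
    intro t ht
    rcases Nat.lt_succ_iff_lt_or_eq.mp ht with ht' | rfl
    · have e1 : (if t ≤ n then v t else j) = v t := if_pos ht'.le
      have e2 : (if t + 1 ≤ n then v (t + 1) else j) = v (t + 1) := if_pos ht'
      simpa only [e1, e2] using hv t ht'
    · have e2' : ¬ (t + 1 ≤ t) := by omega
      simp only [if_pos le_rfl, if_neg e2', hvn]
      exact h2

lemma no_short_loop (A : Matrix (Fin d) (Fin d) ℝ) (hA : ∀ i j, 0 ≤ A i j)
    (h : ∀ k, 1 ≤ k → (A ^ k).trace = 0) (v : ℕ → Fin d)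
    (hv : ∀ t < d, 0 < A (v t) (v (t + 1))) (s t : ℕ) (hst : s < t) (htd : t ≤ d)
    (heq : v s = v t) : False := by
  set m := t - s with hm
  have hm1 : 1 ≤ m := by omega
  have hw : 0 < (A ^ m) (v s) (v (s + m)) := by
    have := walk_pos A hA m (fun u => v (s + u)) ?_
    · simpa using this
    · intro u hu
      have hud : s + u < d := by omega
      have := hv (s + u) hud
      have e : s + (u + 1) = s + u + 1 := by omega
      simpa [e] using this
  have hsm : s + m = t := by omega
  rw [hsm, ← heq] at hw
  have htr : (A ^ m).trace = ∑ l, (A ^ m) l l := by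
    simp [Matrix.trace, Matrix.diag]
  have hle : (A ^ m) (v s) (v s) ≤ (A ^ m).trace := by
    rw [htr]
    exact Finset.single_le_sum (fun l _ => pow_entry_nonneg A hA m l l) (Finset.mem_univ (v s))
  rw [h m hm1] at hle
  exact absurd (hw.trans_le hle) (lt_irrefl 0)

lemma nilpotent_of_traces (A : Matrix (Fin d) (Fin d) ℝ) (hA : ∀ i j, 0 ≤ A i j)
    (h : ∀ k, 1 ≤ k → (A ^ k).trace = 0) : A ^ d = 0 := by
  ext i j
  rw [Matrix.zero_apply]
  by_contra hne
  have hpos : 0 < (A ^ d) i j := lt_of_le_of_ne (pow_entry_nonneg A hA d i j) (Ne.symm hne)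
  obtain ⟨v, hv0, hvd, hv⟩ := exists_walk A hA d i j hpos
  have hni : ¬ Function.Injective (fun t : Fin (d + 1) => v (t : ℕ)) := by
    intro hinj
    have hcard := Fintype.card_le_of_injective _ hinj
    simp only [Fintype.card_fin] at hcard
    omega
  rw [Function.not_injective_iff] at hni
  obtain ⟨a, b, hab, hne'⟩ := hni
  rcases (show a ≠ b from hne').lt_or_gt with hlt | hlt
  · exact no_short_loop A hA h v hv a b (by exact_mod_cast hlt) (by omega) hab
  · exact no_short_loop A hA h v hv b a (by exact_mod_cast hlt) (by omega) hab.symm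

lemma trace_exp_eq (A : Matrix (Fin d) (Fin d) ℝ) :
    Summable (fun k : ℕ => ((Nat.factorial k : ℝ))⁻¹ * (A ^ k).trace) ∧
    (NormedSpace.exp A).trace =
      ∑' k : ℕ, ((Nat.factorial k : ℝ))⁻¹ * (A ^ k).trace := by
  letI : SeminormedRing (Matrix (Fin d) (Fin d) ℝ) := Matrix.linftyOpSemiNormedRing
  letI : NormedRing (Matrix (Fin d) (Fin d) ℝ) := Matrix.linftyOpNormedRing
  letI : NormedAlgebra ℝ (Matrix (Fin d) (Fin d) ℝ) := Matrix.linftyOpNormedAlgebra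
  have hsum : Summable (fun k : ℕ => ((Nat.factorial k : ℝ))⁻¹ • A ^ k) :=
    NormedSpace.expSeries_summable' A
  have hcont : Continuous (Matrix.traceLinearMap (Fin d) ℝ ℝ) :=
    LinearMap.continuous_of_finiteDimensional _
  have hmap := hsum.hasSum.map (Matrix.traceLinearMap (Fin d) ℝ ℝ).toAddMonoidHom hcont
  have hmap' : HasSum (fun k : ℕ => ((Nat.factorial k : ℝ))⁻¹ * (A ^ k).trace)
      ((∑' k : ℕ, ((Nat.factorial k : ℝ))⁻¹ • A ^ k).trace) := by
    simpa [Function.comp_def, Matrix.trace_smul, smul_eq_mul] using hmap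
  refine ⟨hmap'.summable, ?_⟩
  rw [NormedSpace.exp_eq_tsum (𝕂 := ℝ)]
  exact hmap'.tsum_eq.symm

lemma spectrum_subset_of_nilpotent {B : Matrix (Fin d) (Fin d) ℂ} (hB : IsNilpotent B) :
    spectrum ℂ B ⊆ {0} := by
  intro μ hμ
  simp only [Set.mem_singleton_iff]
  by_contra hμ0
  rw [spectrum.mem_iff] at hμ
  apply hμ
  have h1 : IsUnit (algebraMap ℂ (Matrix (Fin d) (Fin d) ℂ) μ) :=
    (Ne.isUnit hμ0).map (algebraMap ℂ (Matrix (Fin d) (Fin d) ℂ))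
  have h2 : IsNilpotent (-B) := hB.neg
  have h3 := h2.isUnit_add_left_of_commute h1 (Algebra.commutes μ (-B)).symm
  simpa [sub_eq_add_neg] using h3

lemma nilpotent_of_spectrum_subset {B : Matrix (Fin d) (Fin d) ℂ}
    (hB : spectrum ℂ B ⊆ {0}) : IsNilpotent B := by
  set e := Matrix.toLinAlgEquiv (Pi.basisFun ℂ (Fin d)) with he
  suffices h : IsNilpotent (e B) by
    have h2 := h.map e.symm
    simpa using h2
  set φ := e B with hφ
  have hspec : spectrum ℂ φ = spectrum ℂ B := AlgEquiv.spectrum_eq e B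
  set p := minpoly ℂ φ with hp
  have hmonic : p.Monic := minpoly.monic (Algebra.IsIntegral.isIntegral φ)
  have hsplits : p.Splits := IsAlgClosed.splits p
  have hroots : ∀ r ∈ p.roots, r = 0 := by
    intro r hr
    have hisroot : p.IsRoot r := (Polynomial.mem_roots hmonic.ne_zero).mp hr
    have heig : Module.End.HasEigenvalue φ r := Module.End.hasEigenvalue_of_isRoot hisroot
    have : r ∈ spectrum ℂ φ := Module.End.hasEigenvalue_iff_mem_spectrum.mp heig
    rw [hspec] at this
    exact hB this
  have heq : p = X ^ p.roots.card := by
    conv_lhs => rw [hsplits.eq_prod_roots_of_monic hmonic]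
    rw [Multiset.map_congr (f := fun r : ℂ => X - C r) (g := fun _ : ℂ => (X : ℂ[X])) rfl
      fun r hr => by rw [hroots r hr]; simp]
    rw [Multiset.map_const', Multiset.prod_replicate]
  have haev := minpoly.aeval ℂ φ
  rw [← hp, heq, map_pow, aeval_X] at haev
  exact ⟨p.roots.card, haev⟩

lemma nilpotent_map_iff {A : Matrix (Fin d) (Fin d) ℝ} :
    IsNilpotent (A.map Complex.ofReal) ↔ IsNilpotent A := by
  have e : ∀ n : ℕ, (A.map Complex.ofReal) ^ n = (A ^ n).map Complex.ofReal := by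
    intro n
    have h := map_pow (Complex.ofRealHom.mapMatrix) A n
    have h2 := h.symm; simp [RingHom.mapMatrix_apply] at h2; exact h2
  constructor
  · rintro ⟨n, hn⟩
    rw [e n] at hn
    refine ⟨n, ?_⟩
    ext i j
    have h2 : ((A ^ n).map Complex.ofReal) i j = 0 := by rw [hn]; rfl
    simpa [Matrix.map_apply, Complex.ofReal_eq_zero] using h2
  · rintro ⟨n, hn⟩
    refine ⟨n, ?_⟩
    rw [e n, hn]
    ext i j
    simp [Matrix.map_apply]

lemma specRad_eq_zero_iff {B : Matrix (Fin d) (Fin d) ℂ} :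
    specRad B = 0 ↔ spectrum ℂ B ⊆ {0} := by
  have hSeq : {r : ℝ | ∃ μ ∈ spectrum ℂ B, r = ‖μ‖} =
      (fun μ : ℂ => ‖μ‖) '' spectrum ℂ B := by
    ext r
    simp only [Set.mem_setOf_eq, Set.mem_image]
    exact ⟨fun ⟨μ, h1, h2⟩ => ⟨μ, h1, h2.symm⟩, fun ⟨μ, h1, h2⟩ => ⟨μ, h1, h2.symm⟩⟩
  constructor
  · intro h μ hμ
    have hS : ‖μ‖ ∈ {r : ℝ | ∃ μ ∈ spectrum ℂ B, r = ‖μ‖} := ⟨μ, hμ, rfl⟩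
    have hbdd : BddAbove {r : ℝ | ∃ μ ∈ spectrum ℂ B, r = ‖μ‖} := by
      rw [hSeq]
      exact ((Matrix.finite_spectrum B).image (fun μ : ℂ => ‖μ‖)).bddAbove
    have hle := le_csSup hbdd hS
    rw [show sSup {r : ℝ | ∃ μ ∈ spectrum ℂ B, r = ‖μ‖} = specRad B from rfl, h] at hle
    have : ‖μ‖ = 0 := le_antisymm hle (norm_nonneg μ)
    simpa using this
  · intro h
    rcases Set.eq_empty_or_nonempty {r : ℝ | ∃ μ ∈ spectrum ℂ B, r = ‖μ‖} with hS | hS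
    · rw [show specRad B = sSup {r : ℝ | ∃ μ ∈ spectrum ℂ B, r = ‖μ‖} from rfl, hS,
        Real.sSup_empty]
    · have hSsing : {r : ℝ | ∃ μ ∈ spectrum ℂ B, r = ‖μ‖} = {0} := by
        apply Set.eq_singleton_iff_nonempty_unique_mem.mpr ⟨hS, ?_⟩
        rintro r ⟨μ, hμ, rfl⟩
        have := h hμ
        simp only [Set.mem_singleton_iff] at this
        simp [this]
      rw [show specRad B = sSup {r : ℝ | ∃ μ ∈ spectrum ℂ B, r = ‖μ‖} from rfl, hSsing,
        csSup_singleton]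

end Aux

set_option maxHeartbeats 1000000 in
theorem specRad_zero_iff_trace_exp_eq {d : ℕ} (A : Matrix (Fin d) (Fin d) ℝ)
    (hA : ∀ i j, 0 ≤ A i j) :
    specRad (A.map (Complex.ofReal)) = 0 ↔ (NormedSpace.exp A).trace = d := by
  have hnil_iff : specRad (A.map Complex.ofReal) = 0 ↔ IsNilpotent A := by
    rw [specRad_eq_zero_iff]
    constructor
    · intro h
      exact nilpotent_map_iff.mp (nilpotent_of_spectrum_subset h)
    · intro h
      exact spectrum_subset_of_nilpotent (nilpotent_map_iff.mpr h)
  rw [hnil_iff]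
  obtain ⟨hs, he⟩ := trace_exp_eq A
  constructor
  · intro hnA
    have htr0 : ∀ k : ℕ, k ≠ 0 → (A ^ k).trace = 0 := by
      intro k hk
      obtain ⟨n, hn⟩ := hnA
      have hnk : (A ^ k) ^ n = 0 := by
        rw [← pow_mul, mul_comm, pow_mul, hn, zero_pow hk]
      have := Matrix.isNilpotent_trace_of_isNilpotent ⟨n, hnk⟩
      exact this.eq_zero
    rw [he, tsum_eq_single 0 ?_]
    · simp [Matrix.trace_one]
    · intro k hk
      rw [htr0 k hk, mul_zero]
  · intro h
    rw [he] at h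
    have hf0 : ((Nat.factorial 0 : ℝ))⁻¹ * (A ^ 0).trace = (d : ℝ) := by
      simp [Matrix.trace_one]
    have hnn : ∀ k : ℕ, 0 ≤ ((Nat.factorial k : ℝ))⁻¹ * (A ^ k).trace := by
      intro k
      refine mul_nonneg (inv_nonneg.mpr (Nat.cast_nonneg _)) ?_
      have htr : (A ^ k).trace = ∑ l, (A ^ k) l l := by simp [Matrix.trace, Matrix.diag]
      rw [htr]
      exact Finset.sum_nonneg fun l _ => pow_entry_nonneg A hA k l l
    rw [hs.tsum_eq_zero_add, hf0] at h
    have hrest : ∑' n : ℕ, ((Nat.factorial (n + 1) : ℝ))⁻¹ * (A ^ (n + 1)).trace = 0 := by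
      linarith
    have hs' : Summable fun n : ℕ => ((Nat.factorial (n + 1) : ℝ))⁻¹ * (A ^ (n + 1)).trace :=
      (summable_nat_add_iff
        (f := fun k : ℕ => ((Nat.factorial k : ℝ))⁻¹ * (A ^ k).trace) 1).mpr hs
    have hterm : ∀ n : ℕ, ((Nat.factorial (n + 1) : ℝ))⁻¹ * (A ^ (n + 1)).trace = 0 := by
      intro n
      refine le_antisymm ?_ (hnn (n + 1))
      rw [← hrest]
      exact hs'.le_tsum n fun j _ => hnn (j + 1)
    have htr : ∀ k, 1 ≤ k → (A ^ k).trace = 0 := by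
      intro k hk
      obtain ⟨m, rfl⟩ : ∃ m, k = m + 1 := ⟨k - 1, by omega⟩
      have hne : ((Nat.factorial (m + 1) : ℝ))⁻¹ ≠ 0 :=
        inv_ne_zero (Nat.cast_ne_zero.mpr (Nat.factorial_ne_zero _))
      exact (mul_eq_zero.mp (hterm m)).resolve_left hne
    exact ⟨d, nilpotent_of_traces A hA htr⟩
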